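/- Let G be an r-partite graph on n vertices with eigenvalues λ_1 ≥ λ_2 ≥ ... ≥ λ_n. Then λ_1 ≤ |λ_{n-r+2}| + |λ_{n-r+3}| + ... + |λ_n|, i.e., the largest eigenvalue is at most the sum of the absolute values of the r−1 smallest eigenvalues. -/

import Mathlib

open Matrix BigOperators Kronecker

/-- The singular values of a square matrix `A` over an `RCLike` field: the square roots of the
eigenvalues of the Hermitian matrix `A * Aᴴ`. -/
noncomputable def singularValues {𝕜 : Type*} [RCLike 𝕜] {m : Type*} [Fintype m] [DecidableEq m]
    (A : Matrix m m 𝕜) : m → ℝ :=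
  fun i => Real.sqrt ((Matrix.isHermitian_mul_conjTranspose_self A).eigenvalues i)

/-- The trace norm (nuclear norm) of a square matrix: the sum of its singular values. -/
noncomputable def traceNorm {𝕜 : Type*} [RCLike 𝕜] {m : Type*} [Fintype m] [DecidableEq m]
    (A : Matrix m m 𝕜) : ℝ :=
  ∑ i, singularValues A i

open RealInnerProductSpace

section helpers

lemma dot_sum_right {ι N : Type*} [Fintype ι] [Fintype N] (x : N → ℝ) (v : ι → N → ℝ)
    (d : ι → ℝ) : x ⬝ᵥ (∑ j, d j • v j) = ∑ j, d j * (x ⬝ᵥ v j) := by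
  simp only [dotProduct, Finset.sum_apply, Pi.smul_apply, smul_eq_mul, Finset.mul_sum]
  rw [Finset.sum_comm]
  exact Finset.sum_congr rfl fun j _ => Finset.sum_congr rfl fun k _ => by ring

lemma dot_sum_left {ι N : Type*} [Fintype ι] [Fintype N] (x : N → ℝ) (v : ι → N → ℝ)
    (d : ι → ℝ) : (∑ j, d j • v j) ⬝ᵥ x = ∑ j, d j * (v j ⬝ᵥ x) := by
  rw [dotProduct_comm, dot_sum_right]
  exact Finset.sum_congr rfl fun j _ => by rw [dotProduct_comm]

lemma mulVec_sum_smul {ι N : Type*} [Fintype ι] [Fintype N] (M : Matrix N N ℝ)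
    (v : ι → N → ℝ) (c : ι → ℝ) :
    M *ᵥ (∑ i, c i • v i) = ∑ i, c i • (M *ᵥ v i) := by
  rw [← Matrix.mulVecLin_apply, map_sum]
  simp [Matrix.mulVecLin_apply]

lemma sum_dot_sum {ι N : Type*} [Fintype ι] [DecidableEq ι] [Fintype N] (v : ι → N → ℝ)
    (horth : ∀ i j, v i ⬝ᵥ v j = if i = j then (1:ℝ) else 0)
    (c d : ι → ℝ) :
    (∑ i, c i • v i) ⬝ᵥ (∑ j, d j • v j) = ∑ i, c i * d i := by
  rw [dot_sum_right]
  have h1 : ∀ j, (∑ i, c i • v i) ⬝ᵥ v j = c j := by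
    intro j
    rw [dotProduct_comm, dot_sum_right]
    simp only [fun i => dotProduct_comm (v j) (v i), horth]
    simp [mul_ite]
  simp only [h1]
  exact Finset.sum_congr rfl fun i _ => by ring

lemma rayleigh_sum {ι N : Type*} [Fintype ι] [DecidableEq ι] [Fintype N] (M : Matrix N N ℝ)
    (v : ι → N → ℝ) (ν : ι → ℝ) (c : ι → ℝ)
    (horth : ∀ i j, v i ⬝ᵥ v j = if i = j then (1:ℝ) else 0)
    (heig : ∀ i, M *ᵥ v i = ν i • v i) :
    (∑ i, c i • v i) ⬝ᵥ (M *ᵥ ∑ i, c i • v i) = ∑ i, ν i * c i ^ 2 := by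
  have h : M *ᵥ (∑ i, c i • v i) = ∑ i, (c i * ν i) • v i := by
    rw [mulVec_sum_smul]
    exact Finset.sum_congr rfl fun i _ => by rw [heig i, smul_smul]
  rw [h, sum_dot_sum v horth]
  exact Finset.sum_congr rfl fun i _ => by ring

lemma real_inner_eq_dot {ι : Type*} [Fintype ι] (x y : EuclideanSpace ℝ ι) :
    ⟪x, y⟫ = ⇑x ⬝ᵥ ⇑y := by
  rw [EuclideanSpace.inner_eq_star_dotProduct]
  simp [star_trivial]
  exact dotProduct_comm _ _

lemma obasis_expand {d : ℕ} (v : OrthonormalBasis (Fin d) ℝ (EuclideanSpace ℝ (Fin d)))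
    (y : EuclideanSpace ℝ (Fin d)) :
    ∑ i, (⇑(v i) ⬝ᵥ ⇑y) • (⇑(v i) : Fin d → ℝ) = ⇑y := by
  have h := v.sum_repr' y
  have h2 : ⇑(∑ i, ⟪v i, y⟫ • v i) = (∑ i, (⇑(v i) ⬝ᵥ ⇑y) • (⇑(v i) : Fin d → ℝ)) := by
    simp only [real_inner_eq_dot]
    rw [WithLp.ofLp_sum]
    rfl
  rw [← h2, h]

lemma obasis_orth {d : ℕ} (v : OrthonormalBasis (Fin d) ℝ (EuclideanSpace ℝ (Fin d)))
    (i j : Fin d) : ⇑(v i) ⬝ᵥ ⇑(v j) = if i = j then (1:ℝ) else 0 := by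
  rw [← real_inner_eq_dot]
  exact orthonormal_iff_ite.mp v.orthonormal i j

lemma trace_eq_sum_eig {d : ℕ} {B : Matrix (Fin d) (Fin d) ℝ} (hB : B.IsHermitian) :
    ∑ i, hB.eigenvalues i = Matrix.trace B := by
  conv_rhs => rw [hB.spectral_theorem]
  rw [Unitary.conjStarAlgAut_apply]
  rw [Matrix.trace_mul_cycle,
    (Matrix.mem_unitaryGroup_iff').mp hB.eigenvectorUnitary.2, Matrix.one_mul]
  simp [Matrix.trace_diagonal]

lemma dot_mulVec_symm {N : Type*} [Fintype N] {M : Matrix N N ℝ} (hM : Mᵀ = M) (x y : N → ℝ) :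
    x ⬝ᵥ (M *ᵥ y) = y ⬝ᵥ (M *ᵥ x) := by
  rw [Matrix.dotProduct_mulVec, ← Matrix.mulVec_transpose, hM, dotProduct_comm]

end helpers

lemma exists_surj_coloring {n r : ℕ} (hrn : r ≤ n) {G : SimpleGraph (Fin n)}
    (hG : G.Colorable r) :
    ∃ c : Fin n → Fin r, (∀ u v, G.Adj u v → c u ≠ c v) ∧ Function.Surjective c := by
  classical
  set S : Finset (Fin n → Fin r) :=
    Finset.univ.filter (fun c => ∀ u v, G.Adj u v → c u ≠ c v) with hS
  have hSne : S.Nonempty := by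
    obtain ⟨C⟩ := hG
    exact ⟨fun v => C v, by simp [hS]; exact fun u v h => C.valid h⟩
  obtain ⟨c, hcS, hmax⟩ := S.exists_max_image (fun c => (Finset.image c Finset.univ).card) hSne
  have hcprop : ∀ u v, G.Adj u v → c u ≠ c v := by
    simpa [hS] using hcS
  refine ⟨c, hcprop, ?_⟩
  by_contra hns
  simp only [Function.Surjective, not_forall] at hns
  obtain ⟨k, hk⟩ := hns
  rw [not_exists] at hk
  have hk : ∀ v, c v ≠ k := fun v h => hk v h
  have hknotim : k ∉ Finset.image c Finset.univ := by
    simp only [Finset.mem_image, Finset.mem_univ, true_and]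
    exact fun ⟨v, hv⟩ => hk v hv
  have hcard : (Finset.image c Finset.univ).card < Finset.univ.card (α := Fin n) := by
    have h1 : (Finset.image c Finset.univ).card ≤ (Finset.univ.erase k).card :=
      Finset.card_le_card (fun x hx => Finset.mem_erase.mpr ⟨fun h => hknotim (h ▸ hx), Finset.mem_univ x⟩)
    have h2 : (Finset.univ.erase k).card = r - 1 := by
      rw [Finset.card_erase_of_mem (Finset.mem_univ k)]; simp
    have hr0 : 0 < r := Fin.pos_iff_nonempty.mpr ⟨k⟩
    simp only [Finset.card_univ, Fintype.card_fin]
    omega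
  obtain ⟨u, -, v, -, huv, hcuv⟩ :=
    Finset.exists_ne_map_eq_of_card_lt_of_maps_to hcard (fun a _ => Finset.mem_image_of_mem c (Finset.mem_univ a))
  set c' : Fin n → Fin r := Function.update c u k with hc'
  have hcu : c' u = k := Function.update_self _ _ _
  have key : ∀ w, w ≠ u → c' w = c w := fun w hw => Function.update_of_ne hw _ _
  have hc'prop : ∀ a b, G.Adj a b → c' a ≠ c' b := by
    intro a b hab
    have hne : a ≠ b := G.ne_of_adj hab
    by_cases ha : a = u
    · have hb : b ≠ u := fun h => hne (ha.trans h.symm)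
      rw [ha, hcu, key b hb]
      exact fun h => hk b h.symm
    · by_cases hb : b = u
      · rw [hb, hcu, key a ha]
        exact fun h => hk a h
      · rw [key a ha, key b hb]
        exact hcprop a b hab
  have hc'S : c' ∈ S := by simp [hS]; exact hc'prop
  have hsub : Finset.image c Finset.univ ⊂ Finset.image c' Finset.univ := by
    constructor
    · intro x hx
      obtain ⟨w, -, rfl⟩ := Finset.mem_image.mp hx
      by_cases hw : w = u
      · rw [hw, hcuv, ← key v (Ne.symm huv)]
        exact Finset.mem_image_of_mem c' (Finset.mem_univ v)
      · rw [← key w hw]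
        exact Finset.mem_image_of_mem c' (Finset.mem_univ w)
    · intro hsup
      have : k ∈ Finset.image c Finset.univ := by
        apply hsup
        exact hcu ▸ Finset.mem_image_of_mem c' (Finset.mem_univ u)
      exact hknotim this
  have := hmax c' hc'S
  have := Finset.card_lt_card hsub
  omega

/-- Hoffman's bound: if `G` is an `r`-partite graph on `n` vertices with
adjacency eigenvalues `μ 0 ≥ μ 1 ≥ ... ≥ μ (n-1)` (in non-increasing order), then the largest
eigenvalue is at most the sum of the absolute values of the `r - 1` smallest eigenvalues,
i.e. `μ 0 ≤ |μ (n-r+1)| + ... + |μ (n-1)|`. -/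
theorem hoffman_bound_r_partite {n r : ℕ} (hn : 0 < n) (hr : 2 ≤ r) (hrn : r ≤ n)
    (G : SimpleGraph (Fin n)) [DecidableRel G.Adj] (hG : G.Colorable r)
    (hA : (G.adjMatrix ℝ).IsHermitian)
    (μ : Fin n → ℝ) (σ : Equiv.Perm (Fin n))
    (hμ : ∀ i, μ i = hA.eigenvalues (σ i))
    (hsort : ∀ i j : Fin n, i ≤ j → μ j ≤ μ i) :
    μ ⟨0, hn⟩ ≤ ∑ i ∈ Finset.univ.filter (fun i : Fin n => n - r + 1 ≤ (i : ℕ)), |μ i| := by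
  classical
  set A := G.adjMatrix ℝ with hAdef
  have hAsymm : Aᵀ = A := G.transpose_adjMatrix (α := ℝ)
  have hAdiag : ∀ v, A v v = 0 := fun v => by simp [hAdef]
  obtain ⟨c, hcprop, hcsurj⟩ := exists_surj_coloring hrn hG
  -- eigendata of A
  set w : Fin n → (Fin n → ℝ) := fun i => ⇑(hA.eigenvectorBasis (σ i)) with hw
  have worth : ∀ i j, w i ⬝ᵥ w j = if i = j then (1:ℝ) else 0 := by
    intro i j
    rw [hw]
    rw [obasis_orth hA.eigenvectorBasis (σ i) (σ j)]
    simp [EmbeddingLike.apply_eq_iff_eq]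
  have weig : ∀ i, A *ᵥ w i = μ i • w i := by
    intro i
    rw [hw, hA.mulVec_eigenvectorBasis, hμ]
  have wexpand : ∀ y : Fin n → ℝ, ∑ i, (w i ⬝ᵥ y) • w i = y := by
    intro y
    have h := obasis_expand hA.eigenvectorBasis ((WithLp.equiv 2 _).symm y)
    simp only [Equiv.apply_symm_apply, WithLp.equiv_symm_apply, WithLp.ofLp_toLp] at h
    rw [← Equiv.sum_comp σ (fun j => (⇑(hA.eigenvectorBasis j) ⬝ᵥ y) • ⇑(hA.eigenvectorBasis j))] at h
    exact h
  set i0 : Fin n := ⟨0, hn⟩ with hi0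
  set x : Fin n → ℝ := w i0 with hx
  have hx1 : x ⬝ᵥ x = 1 := by
    have := worth i0 i0
    simpa using this
  have hxeig : A *ᵥ x = μ i0 • x := weig i0
  have hmu0max : ∀ t, μ t ≤ μ i0 := fun t => hsort i0 t (by simp [Fin.le_def, hi0])
  -- color classes
  set z : Fin r → (Fin n → ℝ) := fun k => fun v => if c v = k then x v else 0 with hz
  have hzsupp : ∀ k v, z k v ≠ 0 → c v = k := by
    intro k v h
    by_contra hcv
    simp [hz, hcv] at h
  have hzsum : ∑ k, z k = x := by
    funext v
    rw [Finset.sum_apply]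
    simp only [hz]
    simp
  -- disjoint supports give orthogonality
  have hdisj : ∀ (f g : Fin n → ℝ) (k l : Fin r), k ≠ l → (∀ v, f v ≠ 0 → c v = k) →
      (∀ v, g v ≠ 0 → c v = l) → f ⬝ᵥ g = 0 := by
    intro f g k l hkl hf hg
    apply Finset.sum_eq_zero
    intro v _
    by_cases hfv : f v = 0
    · simp [hfv]
    · by_cases hgv : g v = 0
      · simp [hgv]
      · exact absurd ((hf v hfv).symm.trans (hg v hgv)) hkl
  have hzdotx : ∀ k, z k ⬝ᵥ x = z k ⬝ᵥ z k := by
    intro k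
    apply Finset.sum_congr rfl
    intro v _
    by_cases hcv : c v = k <;> simp [hz, hcv]
  have hzAz : ∀ k, z k ⬝ᵥ (A *ᵥ z k) = 0 := by
    intro k
    apply Finset.sum_eq_zero
    intro u _
    rcases eq_or_ne (z k u) 0 with h | h
    · simp [h]
    · have hcu := hzsupp k u h
      have : A *ᵥ z k = fun u => ∑ v, A u v * z k v := rfl
      rw [this]
      simp only
      rw [show (∑ v, A u v * z k v) = 0 from Finset.sum_eq_zero ?_, mul_zero]
      intro v _
      rcases eq_or_ne (z k v) 0 with h2 | h2
      · simp [h2]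
      · have hcv := hzsupp k v h2
        have : ¬ G.Adj u v := fun hadj => hcprop u v hadj (hcu.trans hcv.symm)
        simp [hAdef, this]
  have hzdd : ∀ k, 0 ≤ z k ⬝ᵥ z k := fun k => Finset.sum_nonneg fun v _ => mul_self_nonneg _
  -- pick representatives
  have hpick : ∀ k : Fin r, ∃ v, c v = k := fun k => hcsurj k
  set pick : Fin r → Fin n := fun k => (hpick k).choose with hpickdef
  have hpickc : ∀ k, c (pick k) = k := fun k => (hpick k).choose_spec
  -- orthonormal family e
  set e : Fin r → (Fin n → ℝ) := fun k =>
    if h : z k = 0 then Pi.single (pick k) 1 else (Real.sqrt (z k ⬝ᵥ z k))⁻¹ • z k with he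
  have hesupp : ∀ k v, e k v ≠ 0 → c v = k := by
    intro k v h
    rw [he] at h
    simp only at h
    split at h
    · rcases eq_or_ne v (pick k) with rfl | hv
      · exact hpickc k
      · simp [Pi.single_apply, hv] at h
    · apply hzsupp k v
      intro h0
      simp [h0] at h
  have heorth : ∀ k l, e k ⬝ᵥ e l = if k = l then (1:
    ℝ) else 0 := by
    intro k l
    rcases eq_or_ne k l with rfl | hkl
    · simp only [if_pos rfl]
      rw [he]
      simp only
      split
      · rename_i h
        simp [dotProduct, Pi.single_apply]
      · rename_i h
        have hpos : 0 < z k ⬝ᵥ z k := by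
          rcases lt_or_eq_of_le (hzdd k) with h1 | h1
          · exact h1
          · exact absurd ((dotProduct_self_eq_zero).mp h1.symm) h
        rw [smul_dotProduct, dotProduct_smul]
        simp only [smul_eq_mul]
        rw [← mul_assoc, ← mul_inv, Real.mul_self_sqrt (le_of_lt hpos)]
        exact inv_mul_cancel₀ (ne_of_gt hpos)
    · rw [if_neg hkl]
      exact hdisj _ _ k l hkl (hesupp k) (hesupp l)
  have heAe : ∀ k, e k ⬝ᵥ (A *ᵥ e k) = 0 := by
    intro k
    rw [he]
    simp only
    split
    · rw [Matrix.mulVec_single]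
      simp [dotProduct, Pi.single_apply, hAdiag]
    · rw [Matrix.mulVec_smul, smul_dotProduct, dotProduct_smul, hzAz k]
      simp
  have hze : ∀ k, z k = Real.sqrt (z k ⬝ᵥ z k) • e k := by
    intro k
    rw [he]
    simp only
    split
    · rename_i h
      simp [h]
    · rename_i h
      have hpos : 0 < z k ⬝ᵥ z k := by
        rcases lt_or_eq_of_le (hzdd k) with h1 | h1
        · exact h1
        · exact absurd ((dotProduct_self_eq_zero).mp h1.symm) h
      rw [smul_smul, mul_inv_cancel₀ (Real.sqrt_ne_zero'.mpr hpos), one_smul]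
  -- the compression matrix B
  set E : Matrix (Fin n) (Fin r) ℝ := Matrix.of fun v k => e k v with hE
  set lift : (Fin r → ℝ) → (Fin n → ℝ) := fun u => E *ᵥ u with hliftdef
  have hlift_eq : ∀ u, lift u = ∑ k, u k • e k := by
    intro u
    funext v
    rw [hliftdef]
    simp only [Matrix.mulVec, dotProduct, hE, Matrix.of_apply, Finset.sum_apply,
      Pi.smul_apply, smul_eq_mul]
    exact Finset.sum_congr rfl fun k _ => by ring
  have hliftdot : ∀ u u', lift u ⬝ᵥ lift u' = ∑ k, u k * u' k := by
    intro u u'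
    rw [hlift_eq, hlift_eq]
    exact sum_dot_sum e heorth u u'
  set B : Matrix (Fin r) (Fin r) ℝ := Matrix.of fun k l => e k ⬝ᵥ (A *ᵥ e l) with hBdef
  have hBsymm : Bᵀ = B := by
    funext k l
    simp only [Matrix.transpose_apply, hBdef, Matrix.of_apply]
    exact dot_mulVec_symm hAsymm (e l) (e k)
  have hBherm : B.IsHermitian := Matrix.ext fun i j => by
    rw [Matrix.conjTranspose_apply, star_trivial]
    exact congrFun (congrFun hBsymm i) j
  have hBuu : ∀ u u', lift u ⬝ᵥ (A *ᵥ lift u') = u ⬝ᵥ (B *ᵥ u') := by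
    intro u u'
    rw [hlift_eq, hlift_eq u', mulVec_sum_smul, dot_sum_right]
    have hR : u ⬝ᵥ (B *ᵥ u') = ∑ k, u k * ∑ l, B k l * u' l := rfl
    rw [hR]
    have hL : ∀ j, u' j * ((∑ k, u k • e k) ⬝ᵥ (A *ᵥ e j)) = ∑ k, u k * (B k j * u' j) := by
      intro j
      rw [dot_sum_left, Finset.mul_sum]
      apply Finset.sum_congr rfl
      intro k _
      simp only [hBdef, Matrix.of_apply]
      ring
    simp only [hL]
    rw [Finset.sum_comm]
    exact Finset.sum_congr rfl fun k _ => by rw [Finset.mul_sum]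
  -- eigendata of B
  set τ : Equiv.Perm (Fin r) := Tuple.sort (fun j => - hBherm.eigenvalues j) with hτ
  set ν : Fin r → ℝ := fun j => hBherm.eigenvalues (τ j) with hν
  set b : Fin r → (Fin r → ℝ) := fun j => ⇑(hBherm.eigenvectorBasis (τ j)) with hb
  have hborth : ∀ i j, b i ⬝ᵥ b j = if i = j then (1:ℝ) else 0 := by
    intro i j
    rw [hb]
    rw [obasis_orth hBherm.eigenvectorBasis (τ i) (τ j)]
    simp [EmbeddingLike.apply_eq_iff_eq]
  have hbeig : ∀ j, B *ᵥ b j = ν j • b j := by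
    intro j
    rw [hb, hBherm.mulVec_eigenvectorBasis, hν]
  have hbanti : ∀ i j : Fin r, i ≤ j → ν j ≤ ν i := by
    intro i j hij
    have h := Tuple.monotone_sort (fun j => - hBherm.eigenvalues j) hij
    simp only [Function.comp_apply] at h
    rw [hν]
    simp only
    rw [hτ] at *
    linarith [h]
  have hbexpand : ∀ u : Fin r → ℝ, ∑ j, (b j ⬝ᵥ u) • b j = u := by
    intro u
    have h := obasis_expand hBherm.eigenvectorBasis ((WithLp.equiv 2 _).symm u)
    simp only [Equiv.apply_symm_apply, WithLp.equiv_symm_apply, WithLp.ofLp_toLp] at h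
    rw [← Equiv.sum_comp τ
      (fun j => (⇑(hBherm.eigenvectorBasis j) ⬝ᵥ u) • ⇑(hBherm.eigenvectorBasis j))] at h
    exact h
  have hνsum : ∑ j, ν j = 0 := by
    rw [hν]
    simp only
    rw [Equiv.sum_comp τ hBherm.eigenvalues, trace_eq_sum_eig hBherm]
    have : Matrix.trace B = ∑ k, B k k := rfl
    rw [this]
    apply Finset.sum_eq_zero
    intro k _
    simp only [hBdef, Matrix.of_apply]
    exact heAe k
  -- the vector a with lift a = x
  set a : Fin r → ℝ := fun k => e k ⬝ᵥ x with ha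
  have haze : ∀ k, a k • e k = z k := by
    intro k
    rw [ha]
    simp only
    by_cases h : z k = 0
    · have hek : e k = Pi.single (pick k) 1 := by rw [he]; simp [h]
      have hxp : x (pick k) = 0 := by
        have : z k (pick k) = 0 := by rw [h]; rfl
        rw [hz] at this
        simpa [hpickc k] using this
      have : e k ⬝ᵥ x = 0 := by
        rw [hek]
        simp [dotProduct, Pi.single_apply, hxp]
      rw [this, zero_smul, h]
    · have hpos : 0 < z k ⬝ᵥ z k := by
        rcases lt_or_eq_of_le (hzdd k) with h1 | h1
        · exact h1
        · exact absurd ((dotProduct_self_eq_zero).mp h1.symm) h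
      have hek : e k = (Real.sqrt (z k ⬝ᵥ z k))⁻¹ • z k := by rw [he]; simp [h]
      rw [hek, smul_dotProduct, hzdotx k, smul_eq_mul, smul_smul]
      have hs : Real.sqrt (z k ⬝ᵥ z k) * Real.sqrt (z k ⬝ᵥ z k) = z k ⬝ᵥ z k :=
        Real.mul_self_sqrt (le_of_lt hpos)
      have hsne : Real.sqrt (z k ⬝ᵥ z k) ≠ 0 := Real.sqrt_ne_zero'.mpr hpos
      have hone : (Real.sqrt (z k ⬝ᵥ z k))⁻¹ * (z k ⬝ᵥ z k) * (Real.sqrt (z k ⬝ᵥ z k))⁻¹ = 1 := by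
        rw [← hs]
        field_simp
        rw [Real.sqrt_sq (Real.sqrt_nonneg _)]
      rw [hone, one_smul]
  have hlifta : lift a = x := by
    rw [hlift_eq]
    calc ∑ k, a k • e k = ∑ k, z k := Finset.sum_congr rfl fun k _ => haze k
    _ = x := hzsum
  have hBa : B *ᵥ a = μ i0 • a := by
    funext k
    have h1 : (B *ᵥ a) k = e k ⬝ᵥ (A *ᵥ lift a) := by
      rw [hlift_eq, mulVec_sum_smul, dot_sum_right]
      have : (B *ᵥ a) k = ∑ l, B k l * a l := rfl
      rw [this]
      exact Finset.sum_congr rfl fun l _ => by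
        simp only [hBdef, Matrix.of_apply]; ring
    rw [h1, hlifta, hxeig, dotProduct_smul]
    simp [ha]
  have hane : a ≠ 0 := by
    intro h0
    have hl0 : lift (0 : Fin r → ℝ) = 0 := by
      rw [hliftdef]
      simp
    rw [h0, hl0] at hlifta
    rw [← hlifta] at hx1
    simp [zero_dotProduct] at hx1
  -- ν 0 = μ i0
  set j0 : Fin r := ⟨0, by omega⟩ with hj0
  have hνbig : ∀ j, ν j ≤ ν j0 := fun j => hbanti j0 j (by simp [Fin.le_def, hj0])
  have hν0ge : μ i0 ≤ ν j0 := by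
    -- μ i0 is an eigenvalue of B
    have hex : ∃ j, ν j = μ i0 := by
      by_contra hnex
      push_neg at hnex
      have hba0 : ∀ j, b j ⬝ᵥ a = 0 := by
        intro j
        have h1 : b j ⬝ᵥ (B *ᵥ a) = μ i0 * (b j ⬝ᵥ a) := by
          rw [hBa, dotProduct_smul]; rfl
        have h2 : b j ⬝ᵥ (B *ᵥ a) = ν j * (b j ⬝ᵥ a) := by
          rw [dot_mulVec_symm hBsymm (b j) a, hbeig j, dotProduct_smul,
            dotProduct_comm]
          rfl
        have h3 : (μ i0 - ν j) * (b j ⬝ᵥ a) = 0 := by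
          rw [sub_mul, ← h1, ← h2]
          ring
        rcases mul_eq_zero.mp h3 with h4 | h4
        · exact absurd (by linarith : ν j = μ i0) (hnex j)
        · exact h4
      have : a = 0 := by
        rw [← hbexpand a]
        apply Finset.sum_eq_zero
        intro j _
        rw [hba0 j, zero_smul]
      exact hane this
    obtain ⟨j, hj⟩ := hex
    rw [← hj]
    exact hνbig j
  have hν0le : ν j0 ≤ μ i0 := by
    set y : Fin n → ℝ := lift (b j0) with hy
    have hyy : y ⬝ᵥ y = 1 := by
      rw [hy, hliftdot]
      have := hborth j0 j0
      simpa [dotProduct] using this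
    have hyAy : y ⬝ᵥ (A *ᵥ y) = ν j0 := by
      rw [hy, hBuu, hbeig, dotProduct_smul]
      simp [hborth j0 j0]
    have hyexp : y = ∑ t, (w t ⬝ᵥ y) • w t := (wexpand y).symm
    have hray : y ⬝ᵥ (A *ᵥ y) = ∑ t, μ t * (w t ⬝ᵥ y) ^ 2 := by
      conv_lhs => rw [hyexp]
      exact rayleigh_sum A w μ (fun t => w t ⬝ᵥ y) worth weig
    have hnorm : (1:ℝ) = ∑ t, (w t ⬝ᵥ y) * (w t ⬝ᵥ y) := by
      rw [← hyy]
      conv_lhs => rw [hyexp]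
      exact sum_dot_sum w worth _ _
    have hle : ∑ t, μ t * (w t ⬝ᵥ y) ^ 2 ≤ ∑ t, μ i0 * (w t ⬝ᵥ y) ^ 2 := by
      apply Finset.sum_le_sum
      intro t _
      exact mul_le_mul_of_nonneg_right (hmu0max t) (sq_nonneg _)
    have : ∑ t, μ i0 * (w t ⬝ᵥ y) ^ 2 = μ i0 := by
      rw [← Finset.mul_sum]
      have : ∑ t, (w t ⬝ᵥ y) ^ 2 = 1 := by
        rw [hnorm]
        exact Finset.sum_congr rfl fun t _ => (sq _)
      rw [this, mul_one]
    calc ν j0 = y ⬝ᵥ (A *ᵥ y) := hyAy.symm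
    _ = ∑ t, μ t * (w t ⬝ᵥ y) ^ 2 := hray
    _ ≤ ∑ t, μ i0 * (w t ⬝ᵥ y) ^ 2 := hle
    _ = μ i0 := this
  have hν0 : ν j0 = μ i0 := le_antisymm hν0le hν0ge
  -- Cauchy interlacing (lower part)
  have hinter : ∀ j : Fin r, 0 < j.1 → μ ⟨n - r + j.1, by omega⟩ ≤ ν j := by
    intro j hj
    set m : Fin n := ⟨n - r + j.1, by omega⟩ with hm
    set p : ℕ := r - j.1 with hp
    set q : ℕ := r - 1 - j.1 with hq
    have hembp : ∀ s : Fin p, j.1 + s.1 < r := fun s => by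
      have := s.2
      omega
    set emb' : Fin p → Fin r := fun s => ⟨j.1 + s.1, hembp s⟩ with hemb'
    have hembq : ∀ t : Fin q, n - r + j.1 + 1 + t.1 < n := fun t => by
      have := t.2
      omega
    set embN : Fin q → Fin n := fun t => ⟨n - r + j.1 + 1 + t.1, hembq t⟩ with hembN
    set bb : Fin p → (Fin r → ℝ) := fun s => b (emb' s) with hbb
    have hbborth : ∀ s s', bb s ⬝ᵥ bb s' = if s = s' then (1:ℝ) else 0 := by
      intro s s'
      rw [hbb]
      simp only
      rw [hborth]
      by_cases hss : s = s'
      · simp [hss]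
      · have hne : emb' s ≠ emb' s' := by
          intro hc
          apply hss
          apply Fin.ext
          have := congrArg Fin.val hc
          simp only [hemb'] at this
          omega
        simp [hss, hne]
    set M : Matrix (Fin q) (Fin p) ℝ := Matrix.of fun t s => w (embN t) ⬝ᵥ lift (bb s) with hM
    have hker : ∃ cc : Fin p → ℝ, cc ≠ 0 ∧ M *ᵥ cc = 0 := by
      have hlt : Module.finrank ℝ (Fin q → ℝ) < Module.finrank ℝ (Fin p → ℝ) := by
        rw [Module.finrank_pi, Module.finrank_pi]
        simp only [Fintype.card_fin]
        omega
      have hk := LinearMap.ker_ne_bot_of_finrank_lt (f := M.mulVecLin) hlt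
      rw [Submodule.ne_bot_iff] at hk
      obtain ⟨cc, hcc1, hcc2⟩ := hk
      refine ⟨cc, hcc2, ?_⟩
      have := LinearMap.mem_ker.mp hcc1
      simpa [Matrix.mulVecLin_apply] using this
    obtain ⟨cc, hccne, hccker⟩ := hker
    set u : Fin r → ℝ := ∑ s, cc s • bb s with hu
    set y : Fin n → ℝ := lift u with hy2
    have hyu : y = ∑ s, cc s • lift (bb s) := by
      rw [hy2, hliftdef]
      simp only
      rw [← Matrix.mulVecLin_apply, hu, map_sum]
      simp [Matrix.mulVecLin_apply]
    have huu : u ⬝ᵥ u = ∑ s, cc s * cc s := by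
      conv_lhs => rw [hu]
      exact sum_dot_sum bb hbborth cc cc
    have huupos : 0 < u ⬝ᵥ u := by
      rw [huu]
      obtain ⟨s0, hs0⟩ := Function.ne_iff.mp hccne
      exact Finset.sum_pos' (fun s _ => mul_self_nonneg _)
        ⟨s0, Finset.mem_univ s0, mul_self_pos.mpr (by simpa using hs0)⟩
    have hconstr : ∀ t : Fin q, w (embN t) ⬝ᵥ y = 0 := by
      intro t
      rw [hyu, dot_sum_right]
      calc ∑ s, cc s * (w (embN t) ⬝ᵥ lift (bb s))
          = ∑ s, M t s * cc s := Finset.sum_congr rfl fun s _ => by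
            simp only [hM, Matrix.of_apply]
            ring
      _ = (M *ᵥ cc) t := rfl
      _ = 0 := by rw [hccker]; rfl
    have hd0 : ∀ t : Fin n, (m : ℕ) < t.1 → w t ⬝ᵥ y = 0 := by
      intro t ht
      simp only [hm] at ht
      have htub := t.2
      have htq : t.1 - (n - r + j.1 + 1) < q := by omega
      have hte : t = embN ⟨t.1 - (n - r + j.1 + 1), htq⟩ := by
        apply Fin.ext
        simp only [hembN]
        omega
      rw [hte]
      exact hconstr _
    have hyAyB : y ⬝ᵥ (A *ᵥ y) = u ⬝ᵥ (B *ᵥ u) := by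
      rw [hy2]
      exact hBuu u u
    have hBuub : u ⬝ᵥ (B *ᵥ u) ≤ ν j * (u ⬝ᵥ u) := by
      have h1 : u ⬝ᵥ (B *ᵥ u) = ∑ s, ν (emb' s) * cc s ^ 2 := by
        conv_lhs => rw [hu]
        exact rayleigh_sum B bb (fun s => ν (emb' s)) cc hbborth (fun s => hbeig (emb' s))
      rw [h1, huu, Finset.mul_sum]
      apply Finset.sum_le_sum
      intro s _
      have hle : ν (emb' s) ≤ ν j := hbanti j (emb' s) (by simp [Fin.le_def, hemb'])
      calc ν (emb' s) * cc s ^ 2 ≤ ν j * cc s ^ 2 :=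
            mul_le_mul_of_nonneg_right hle (sq_nonneg _)
      _ = ν j * (cc s * cc s) := by ring
    have hAlower : μ m * (y ⬝ᵥ y) ≤ y ⬝ᵥ (A *ᵥ y) := by
      have hyexp : y = ∑ t, (w t ⬝ᵥ y) • w t := (wexpand y).symm
      have h1 : y ⬝ᵥ (A *ᵥ y) = ∑ t, μ t * (w t ⬝ᵥ y) ^ 2 := by
        conv_lhs => rw [hyexp]
        exact rayleigh_sum A w μ _ worth weig
      have h2 : y ⬝ᵥ y = ∑ t, (w t ⬝ᵥ y) * (w t ⬝ᵥ y) := by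
        conv_lhs => rw [hyexp]
        exact sum_dot_sum w worth _ _
      rw [h1, h2, Finset.mul_sum]
      apply Finset.sum_le_sum
      intro t _
      by_cases ht : (t : ℕ) ≤ (m : ℕ)
      · have hmt : μ m ≤ μ t := hsort t m ht
        calc μ m * ((w t ⬝ᵥ y) * (w t ⬝ᵥ y)) = μ m * (w t ⬝ᵥ y) ^ 2 := by ring
        _ ≤ μ t * (w t ⬝ᵥ y) ^ 2 := mul_le_mul_of_nonneg_right hmt (sq_nonneg _)
      · have h0 : w t ⬝ᵥ y = 0 := hd0 t (by omega)
        rw [h0]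
        simp
    have hyy' : y ⬝ᵥ y = u ⬝ᵥ u := by
      rw [hy2]
      exact hliftdot u u
    have hfinal : μ m * (u ⬝ᵥ u) ≤ ν j * (u ⬝ᵥ u) := by
      calc μ m * (u ⬝ᵥ u) = μ m * (y ⬝ᵥ y) := by rw [hyy']
      _ ≤ y ⬝ᵥ (A *ᵥ y) := hAlower
      _ = u ⬝ᵥ (B *ᵥ u) := hyAyB
      _ ≤ ν j * (u ⬝ᵥ u) := hBuub
    nlinarith [hfinal, huupos]
  -- conclusion
  have hsplit : ν j0 + ∑ j ∈ Finset.univ.erase j0, ν j = 0 := by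
    rw [Finset.add_sum_erase _ ν (Finset.mem_univ j0)]
    exact hνsum
  have hιlt : ∀ j : Fin r, n - r + j.1 < n := fun j => by
    have := j.2
    omega
  set ι : Fin r → Fin n := fun j => ⟨n - r + j.1, hιlt j⟩ with hι
  have hbound : μ i0 ≤ ∑ j ∈ Finset.univ.erase j0, |μ (ι j)| := by
    have h1 : μ i0 = ∑ j ∈ Finset.univ.erase j0, (-ν j) := by
      rw [← hν0]
      rw [Finset.sum_neg_distrib]
      linarith
    rw [h1]
    apply Finset.sum_le_sum
    intro j hjmem
    have hjne : j ≠ j0 := (Finset.mem_erase.mp hjmem).1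
    have hjpos : 0 < j.1 :=
      Nat.pos_of_ne_zero (fun h => hjne (Fin.ext (by simp [hj0, h])))
    have h2 : μ (ι j) ≤ ν j := hinter j hjpos
    calc -ν j ≤ -μ (ι j) := by linarith
    _ ≤ |μ (ι j)| := neg_le_abs _
  refine le_trans hbound (le_of_eq ?_)
  apply Finset.sum_nbij' (i := fun j => ι j)
    (j := fun i => (⟨i.1 - (n - r), by
      have := i.2
      omega⟩ : Fin r))
  · intro j hjmem
    have hjne : j ≠ j0 := (Finset.mem_erase.mp hjmem).1
    have hjpos : 0 < j.1 :=
      Nat.pos_of_ne_zero (fun h => hjne (Fin.ext (by simp [hj0, h])))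
    simp only [Finset.mem_filter, Finset.mem_univ, true_and, hι]
    omega
  · intro i himem
    simp only [Finset.mem_filter, Finset.mem_univ, true_and] at himem
    rw [Finset.mem_erase]
    constructor
    · intro hc
      have := congrArg Fin.val hc
      simp only [hj0] at this
      omega
    · exact Finset.mem_univ _
  · intro j hjmem
    have hjne : j ≠ j0 := (Finset.mem_erase.mp hjmem).1
    have hjpos : 0 < j.1 :=
      Nat.pos_of_ne_zero (fun h => hjne (Fin.ext (by simp [hj0, h])))
    apply Fin.ext
    simp only [hι]
    omega
  · intro i himem
    simp only [Finset.mem_filter, Finset.mem_univ, true_and] at himem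
    apply Fin.ext
    simp only [hι]
    omega
  · intro j _
    rfl
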